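/- Consider the gradient-descent iteration under the stated setup with d = 2, and define β₀ = (1, x), β₁ = (x, −1) ∈ ℝ². Suppose for each t the vectors w²_{t,+} and w²_{t,−} (coordinate-wise squares) are decomposed as w²_{t,+} = p⁰_t β₀ + p¹_t β₁ + β*/2 and w²_{t,−} = q⁰_t β₀ + q¹_t β₁ − β*/2, and write 𝐩_t = (p⁰_t, p¹_t), 𝐪_t = (q⁰_t, q¹_t) ∈ ℝ². Then, with r_t = (1+x²)(p⁰_t − q⁰_t), the coefficient vectors satisfy 𝐩_{t+1} = (I − 2η r_t A + η² r_t² B)·𝐩_t − (2η r_t − η² r_t²)·μ β₀/(2(1+x²)) and 𝐪_{t+1} = (I + 2η r_t A + η² r_t² B)·𝐪_t − (2η r_t + η² r_t²)·μ β₀/(2(1+x²)), where A = (1/(1+x²))·[[1 + x³, x(1−x)], [x(1−x), x(1+x)]] and B = (1/(1+x²))·[[1 + x⁴, x(1−x²)], [x(1−x²), 2x²]]. -/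

import Mathlib

/-!
STATEMENT 5: the basis-coefficient vectors 𝐩_t, 𝐪_t of the decompositions
w²_{t,+} = p⁰_t β₀ + p¹_t β₁ + β*/2 and w²_{t,−} = q⁰_t β₀ + q¹_t β₁ − β*/2
(with β₀ = (1,x), β₁ = (x,−1), β* = (μ,0)) satisfy, along gradient descent,
the matrix recurrences with matrices A and B, where
r_t = (1+x²)(p⁰_t − q⁰_t).
-/

theorem gd_pq_dynamics
    (μ η α x : ℝ) (hμ : μ ≠ 0) (hη : 0 < η) (hα : 0 < α)
    (wp wm : ℕ → ℝ × ℝ) (r : ℕ → ℝ) (p q : ℕ → Fin 2 → ℝ)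
    (hr : ∀ t, r t =
      (((wp t).1 ^ 2 - (wm t).1 ^ 2) + x * ((wp t).2 ^ 2 - (wm t).2 ^ 2)) - μ)
    (hwp : ∀ t, wp (t + 1) =
      ((wp t).1 - η * r t * (1 * (wp t).1), (wp t).2 - η * r t * (x * (wp t).2)))
    (hwm : ∀ t, wm (t + 1) =
      ((wm t).1 + η * r t * (1 * (wm t).1), (wm t).2 + η * r t * (x * (wm t).2)))
    (hdecp : ∀ t, (wp t).1 ^ 2 = p t 0 * 1 + p t 1 * x + μ / 2 ∧
                  (wp t).2 ^ 2 = p t 0 * x + p t 1 * (-1) + 0)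
    (hdecq : ∀ t, (wm t).1 ^ 2 = q t 0 * 1 + q t 1 * x - μ / 2 ∧
                  (wm t).2 ^ 2 = q t 0 * x + q t 1 * (-1) - 0) :
    (∀ t, r t = (1 + x ^ 2) * (p t 0 - q t 0)) ∧
    (∀ t, p (t + 1) =
      ((1 : Matrix (Fin 2) (Fin 2) ℝ)
          - (2 * η * r t) •
              ((1 / (1 + x ^ 2)) •
                !![1 + x ^ 3, x * (1 - x); x * (1 - x), x * (1 + x)])
          + (η ^ 2 * r t ^ 2) •
              ((1 / (1 + x ^ 2)) •
                !![1 + x ^ 4, x * (1 - x ^ 2); x * (1 - x ^ 2), 2 * x ^ 2])).mulVec (p t)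
        - (2 * η * r t - η ^ 2 * r t ^ 2) • (μ / (2 * (1 + x ^ 2))) • ![(1 : ℝ), x]) ∧
    (∀ t, q (t + 1) =
      ((1 : Matrix (Fin 2) (Fin 2) ℝ)
          + (2 * η * r t) •
              ((1 / (1 + x ^ 2)) •
                !![1 + x ^ 3, x * (1 - x); x * (1 - x), x * (1 + x)])
          + (η ^ 2 * r t ^ 2) •
              ((1 / (1 + x ^ 2)) •
                !![1 + x ^ 4, x * (1 - x ^ 2); x * (1 - x ^ 2), 2 * x ^ 2])).mulVec (q t)
        - (2 * η * r t + η ^ 2 * r t ^ 2) • (μ / (2 * (1 + x ^ 2))) • ![(1 : ℝ), x]) := by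
  have hx2 : (1 + x ^ 2) ≠ 0 := by positivity
  refine ⟨?_, ?_, ?_⟩
  · intro t
    have ea := (hdecp t).1
    have eb := (hdecp t).2
    have ca := (hdecq t).1
    have cb := (hdecq t).2
    linear_combination hr t + ea - ca + x * eb - x * cb
  · intro t
    have ea := (hdecp t).1
    have eb := (hdecp t).2
    have e1 := (hdecp (t + 1)).1
    have e2 := (hdecp (t + 1)).2
    rw [hwp t] at e1 e2
    have hu0 : p (t + 1) 0 =
        ((1 - η * r t) ^ 2 * (p t 0 + p t 1 * x + μ / 2)
          + x * (1 - η * r t * x) ^ 2 * (p t 0 * x - p t 1) - μ / 2) / (1 + x ^ 2) := by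
      rw [eq_div_iff hx2]
      linear_combination -e1 - x * e2 + (1 - η * r t) ^ 2 * ea + x * (1 - η * r t * x) ^ 2 * eb
    have hu1 : p (t + 1) 1 =
        (x * (1 - η * r t) ^ 2 * (p t 0 + p t 1 * x + μ / 2)
          - (1 - η * r t * x) ^ 2 * (p t 0 * x - p t 1) - μ * x / 2) / (1 + x ^ 2) := by
      rw [eq_div_iff hx2]
      linear_combination -x * e1 + e2 + x * (1 - η * r t) ^ 2 * ea - (1 - η * r t * x) ^ 2 * eb
    funext i
    fin_cases i <;>
      simp only [Matrix.mulVec, dotProduct, Matrix.of_apply, Fin.sum_univ_two, Matrix.add_apply,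
        Matrix.sub_apply, Matrix.smul_apply, Matrix.one_apply, Matrix.cons_val', Matrix.cons_val_zero,
        Matrix.cons_val_one, Matrix.head_cons, Matrix.empty_val', Matrix.cons_val_fin_one,
        Matrix.head_fin_const, Pi.sub_apply, Pi.smul_apply, smul_eq_mul, if_true, if_false,
        Fin.isValue, ne_eq, one_ne_zero, not_false_eq_true, Matrix.one_apply_eq,
        Matrix.one_apply_ne, zero_ne_one, Fin.mk_one, Fin.mk_zero, Fin.zero_eta, Fin.ne_of_val_ne]
    · rw [hu0]; field_simp; ring
    · rw [hu1]; field_simp; ring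
  · intro t
    have ea := (hdecq t).1
    have eb := (hdecq t).2
    have e1 := (hdecq (t + 1)).1
    have e2 := (hdecq (t + 1)).2
    rw [hwm t] at e1 e2
    have hu0 : q (t + 1) 0 =
        ((1 + η * r t) ^ 2 * (q t 0 + q t 1 * x - μ / 2)
          + x * (1 + η * r t * x) ^ 2 * (q t 0 * x - q t 1) + μ / 2) / (1 + x ^ 2) := by
      rw [eq_div_iff hx2]
      linear_combination -e1 - x * e2 + (1 + η * r t) ^ 2 * ea + x * (1 + η * r t * x) ^ 2 * eb
    have hu1 : q (t + 1) 1 =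
        (x * (1 + η * r t) ^ 2 * (q t 0 + q t 1 * x - μ / 2)
          - (1 + η * r t * x) ^ 2 * (q t 0 * x - q t 1) + μ * x / 2) / (1 + x ^ 2) := by
      rw [eq_div_iff hx2]
      linear_combination -x * e1 + e2 + x * (1 + η * r t) ^ 2 * ea - (1 + η * r t * x) ^ 2 * eb
    funext i
    fin_cases i <;>
      simp only [Matrix.mulVec, dotProduct, Matrix.of_apply, Fin.sum_univ_two, Matrix.add_apply,
        Matrix.sub_apply, Matrix.smul_apply, Matrix.one_apply, Matrix.cons_val', Matrix.cons_val_zero,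
        Matrix.cons_val_one, Matrix.head_cons, Matrix.empty_val', Matrix.cons_val_fin_one,
        Matrix.head_fin_const, Pi.sub_apply, Pi.smul_apply, smul_eq_mul, if_true, if_false,
        Fin.isValue, ne_eq, one_ne_zero, not_false_eq_true, Matrix.one_apply_eq,
        Matrix.one_apply_ne, zero_ne_one, Fin.mk_one, Fin.mk_zero, Fin.zero_eta, Fin.ne_of_val_ne]
    · rw [hu0]; field_simp; ring
    · rw [hu1]; field_simp; ring
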